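/- In the presented group πₙ, for each j with 1 ≤ j ≤ n, the subgroup π̄ⱼ generated by {sⱼ, s_{j+1}, …, sₙ} is a normal subgroup of πₙ; moreover (with π̄_{n+1} = 1) each π̄_{j+1} is normal in π̄ⱼ and the quotient group π̄ⱼ/π̄_{j+1} is cyclic, generated by the image of sⱼ. In particular πₙ is supersolvable. -/

import Mathlib

open FreeGroup

/-- The relator set for the fundamental group `πₙ` of the total space of an iterated
`S¹`-bundle of height `n`: for `i < j`,
`sᵢ sⱼ sᵢ⁻¹ = sₙ^{aⁿᵢⱼ} ⋯ s_{j+1}^{a^{j+1}ᵢⱼ} sⱼ^{εᵢⱼ}` (indices `0`-based). -/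
def iterRels (n : ℕ) (ε : Fin n → Fin n → ℤ) (a : Fin n → Fin n → Fin n → ℤ) :
    Set (FreeGroup (Fin n)) :=
  { r | ∃ i j : Fin n, i < j ∧
      r = of i * of j * (of i)⁻¹ *
        ((((List.finRange n).filter fun k => decide (j < k)).reverse.map
            fun k => of k ^ a i j k).prod * of j ^ ε i j)⁻¹ }

/-- The subgroup `π̄_{j+1}` of `πₙ` generated by `s_{j+1}, …, sₙ`
(`0`-based: generated by the `s_k` with `j ≤ k`). -/
def piBar (n : ℕ) (ε : Fin n → Fin n → ℤ) (a : Fin n → Fin n → Fin n → ℤ) (j : ℕ) :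
    Subgroup (PresentedGroup (iterRels n ε a)) :=
  Subgroup.closure { x | ∃ k : Fin n, j ≤ (k : ℕ) ∧ x = PresentedGroup.of k }

/-- A group is supersolvable if there is a finite series of subgroups, each normal in
the whole group, descending from the whole group to the trivial group, with each
successive quotient cyclic (i.e. each `c i` is generated modulo `c (i+1)` by a single
element). -/
def IsSupersolvable (G : Type*) [Group G] : Prop :=
  ∃ (m : ℕ) (c : ℕ → Subgroup G),
    c 0 = ⊤ ∧ c m = ⊥ ∧ (∀ i, c (i + 1) ≤ c i) ∧ (∀ i, (c i).Normal) ∧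
    ∀ i, ∃ g ∈ c i, ∀ x ∈ c i, ∃ k : ℤ, x * (g ^ k)⁻¹ ∈ c (i + 1)

section Aux

variable {n : ℕ} {ε : Fin n → Fin n → ℤ} {a : Fin n → Fin n → Fin n → ℤ}

lemma gen_mem {j : ℕ} {k : Fin n} (h : j ≤ (k : ℕ)) :
    (PresentedGroup.of k : PresentedGroup (iterRels n ε a)) ∈ piBar n ε a j :=
  Subgroup.subset_closure ⟨k, h, rfl⟩

lemma piBar_anti {j j' : ℕ} (h : j ≤ j') : piBar n ε a j' ≤ piBar n ε a j :=
  Subgroup.closure_mono (fun x ⟨k, hk, hx⟩ => ⟨k, le_trans h hk, hx⟩)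

lemma piBar_eq_bot {j : ℕ} (h : n ≤ j) : piBar n ε a j = ⊥ := by
  have : { x : PresentedGroup (iterRels n ε a) | ∃ k : Fin n, j ≤ (k : ℕ) ∧ x = PresentedGroup.of k } = ∅ := by
    ext x
    simp only [Set.mem_setOf_eq, Set.mem_empty_iff_false, iff_false]
    rintro ⟨k, hk, -⟩
    exact absurd (lt_of_lt_of_le k.isLt h) (not_lt.mpr hk)
  rw [piBar, this, Subgroup.closure_empty]

lemma rel_key (i j : Fin n) (hij : i < j) :
    (PresentedGroup.of i : PresentedGroup (iterRels n ε a)) * PresentedGroup.of j *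
        (PresentedGroup.of i)⁻¹ =
      (((List.finRange n).filter fun k => decide (j < k)).reverse.map
          fun k => (PresentedGroup.of k : PresentedGroup (iterRels n ε a)) ^ a i j k).prod *
        PresentedGroup.of j ^ ε i j := by
  have hr : (of i * of j * (of i)⁻¹ *
      ((((List.finRange n).filter fun k => decide (j < k)).reverse.map
          fun k => of k ^ a i j k).prod * of j ^ ε i j)⁻¹) ∈ iterRels n ε a :=
    ⟨i, j, hij, rfl⟩
  have h1 : PresentedGroup.mk (iterRels n ε a)
      (of i * of j * (of i)⁻¹ *
        ((((List.finRange n).filter fun k => decide (j < k)).reverse.map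
            fun k => of k ^ a i j k).prod * of j ^ ε i j)⁻¹) = 1 :=
    (QuotientGroup.eq_one_iff _).mpr (Subgroup.subset_normalClosure hr)
  simp only [MonoidHom.map_mul, MonoidHom.map_inv, MonoidHom.map_zpow, map_list_prod,
    List.map_map, mul_inv_eq_one] at h1
  simp only [Function.comp_def, map_zpow] at h1
  convert h1 using 3 <;> rfl


lemma W_mem (i j : Fin n) :
    (((List.finRange n).filter fun k => decide (j < k)).reverse.map
        fun k => (PresentedGroup.of k : PresentedGroup (iterRels n ε a)) ^ a i j k).prod ∈
      piBar n ε a ((j : ℕ) + 1) := by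
  apply Subgroup.list_prod_mem
  intro x hx
  simp only [List.mem_map, List.mem_reverse, List.mem_filter, List.mem_finRange, true_and,
    decide_eq_true_eq] at hx
  obtain ⟨k, hk, rfl⟩ := hx
  exact Subgroup.zpow_mem _ (gen_mem hk) _

lemma conj_gen_mem (j : ℕ) (i k : Fin n) (hk : j ≤ (k : ℕ)) :
    (PresentedGroup.of i : PresentedGroup (iterRels n ε a)) * PresentedGroup.of k *
      (PresentedGroup.of i)⁻¹ ∈ piBar n ε a j := by
  by_cases hji : j ≤ (i : ℕ)
  · exact mul_mem (mul_mem (gen_mem hji) (gen_mem hk)) (inv_mem (gen_mem hji))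
  · have hik : i < k := by
      have : (i : ℕ) < (k : ℕ) := by omega
      exact this
    rw [rel_key i k hik]
    exact mul_mem (piBar_anti (by omega) (W_mem i k))
      (Subgroup.zpow_mem _ (gen_mem hk) _)

lemma conj_mem (j : ℕ) (i : Fin n) {x : PresentedGroup (iterRels n ε a)}
    (hx : x ∈ piBar n ε a j) :
    PresentedGroup.of i * x * (PresentedGroup.of i)⁻¹ ∈ piBar n ε a j := by
  induction hx using Subgroup.closure_induction with
  | mem y hy =>
    obtain ⟨k, hk, rfl⟩ := hy
    exact conj_gen_mem j i k hk
  | one => simpa using one_mem _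
  | mul y z hy hz ihy ihz =>
    have : PresentedGroup.of i * (y * z) * (PresentedGroup.of i)⁻¹ =
        (PresentedGroup.of i * y * (PresentedGroup.of i)⁻¹) *
        (PresentedGroup.of i * z * (PresentedGroup.of i)⁻¹) := by group
    rw [this]; exact mul_mem ihy ihz
  | inv y hy ihy =>
    have : PresentedGroup.of i * y⁻¹ * (PresentedGroup.of i)⁻¹ =
        (PresentedGroup.of i * y * (PresentedGroup.of i)⁻¹)⁻¹ := by group
    rw [this]; exact inv_mem ihy

lemma invconj_mem (hε : ∀ i j : Fin n, i < j → ε i j = 1 ∨ ε i j = -1) : ∀ m j : ℕ, n ≤ j + m → ∀ i : Fin n,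
    ∀ x ∈ piBar n ε a j,
      (PresentedGroup.of i : PresentedGroup (iterRels n ε a))⁻¹ * x * PresentedGroup.of i ∈
        piBar n ε a j := by
  intro m
  induction m with
  | zero =>
    intro j hj i x hx
    rw [piBar_eq_bot (by omega)] at hx ⊢
    simp only [Subgroup.mem_bot] at hx
    simp [hx]
  | succ m ih =>
    intro j hj i x hx
    induction hx using Subgroup.closure_induction with
    | mem y hy =>
      obtain ⟨k, hk, rfl⟩ := hy
      by_cases hji : j ≤ (i : ℕ)
      · exact mul_mem (mul_mem (inv_mem (gen_mem hji)) (gen_mem hk)) (gen_mem hji)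
      · have hik : i < k := by
          have : (i : ℕ) < (k : ℕ) := by omega
          exact this
        set W := (((List.finRange n).filter fun l => decide (k < l)).reverse.map
          fun l => (PresentedGroup.of l : PresentedGroup (iterRels n ε a)) ^ a i k l).prod with hWdef
        have hW : W ∈ piBar n ε a (j + 1) := piBar_anti (by omega) (W_mem i k)
        have hu : (PresentedGroup.of i)⁻¹ * W * PresentedGroup.of i ∈ piBar n ε a (j + 1) :=
          ih (j + 1) (by omega) i W hW
        have hrel := rel_key (ε := ε) (a := a) i k hik
        rw [← hWdef] at hrel
        set u := (PresentedGroup.of i : PresentedGroup (iterRels n ε a))⁻¹ * W *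
          PresentedGroup.of i with hudef
        have hy : ((PresentedGroup.of i)⁻¹ * PresentedGroup.of k * PresentedGroup.of i) ^ ε i k =
            u⁻¹ * PresentedGroup.of k := by
          have hc : ((PresentedGroup.of i : PresentedGroup (iterRels n ε a))⁻¹ *
              PresentedGroup.of k * PresentedGroup.of i) ^ ε i k =
              (PresentedGroup.of i)⁻¹ * PresentedGroup.of k ^ ε i k * PresentedGroup.of i := by
            have := conj_zpow (i := ε i k) (a := (PresentedGroup.of i :
              PresentedGroup (iterRels n ε a))⁻¹) (b := PresentedGroup.of k)
            simpa using this
          rw [hc, hudef]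
          rw [show (PresentedGroup.of k : PresentedGroup (iterRels n ε a)) ^ ε i k =
            W⁻¹ * (PresentedGroup.of i * PresentedGroup.of k * (PresentedGroup.of i)⁻¹) by
              rw [hrel]; group]
          group
        rcases hε i k hik with h1 | h1
        · have : (PresentedGroup.of i : PresentedGroup (iterRels n ε a))⁻¹ *
              PresentedGroup.of k * PresentedGroup.of i = u⁻¹ * PresentedGroup.of k := by
            rw [← hy, h1, zpow_one]
          rw [this]
          exact mul_mem (inv_mem (piBar_anti (by omega) hu)) (gen_mem hk)
        · have : (PresentedGroup.of i : PresentedGroup (iterRels n ε a))⁻¹ *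
              PresentedGroup.of k * PresentedGroup.of i = (u⁻¹ * PresentedGroup.of k)⁻¹ := by
            rw [← hy, h1]
            group
          rw [this]
          exact inv_mem (mul_mem (inv_mem (piBar_anti (by omega) hu)) (gen_mem hk))
    | one => simpa using one_mem _
    | mul y z hy hz ihy ihz =>
      have heq : (PresentedGroup.of i : PresentedGroup (iterRels n ε a))⁻¹ * (y * z) *
          PresentedGroup.of i =
          ((PresentedGroup.of i)⁻¹ * y * PresentedGroup.of i) *
          ((PresentedGroup.of i)⁻¹ * z * PresentedGroup.of i) := by group
      rw [heq]; exact mul_mem ihy ihz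
    | inv y hy ihy =>
      have heq : (PresentedGroup.of i : PresentedGroup (iterRels n ε a))⁻¹ * y⁻¹ *
          PresentedGroup.of i =
          ((PresentedGroup.of i)⁻¹ * y * PresentedGroup.of i)⁻¹ := by group
      rw [heq]; exact inv_mem ihy


lemma piBar_normal (hε : ∀ i j : Fin n, i < j → ε i j = 1 ∨ ε i j = -1) (j : ℕ) :
    (piBar n ε a j).Normal := by
  constructor
  intro x hx g
  have hg : g ∈ Subgroup.closure (Set.range (PresentedGroup.of :
      Fin n → PresentedGroup (iterRels n ε a))) := by
    rw [PresentedGroup.closure_range_of]; trivial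
  revert x
  have : ∀ x ∈ piBar n ε a j, g * x * g⁻¹ ∈ piBar n ε a j ∧
      g⁻¹ * x * g ∈ piBar n ε a j := by
    induction hg using Subgroup.closure_induction with
    | mem y hy =>
      obtain ⟨i, rfl⟩ := hy
      intro x hx
      exact ⟨conj_mem j i hx, invconj_mem hε n j (by omega) i x hx⟩
    | one =>
      intro x hx
      refine ⟨?_, ?_⟩ <;> simpa using hx
    | mul y z hy hz ihy ihz =>
      intro x hx
      constructor
      · have : y * z * x * (y * z)⁻¹ = y * (z * x * z⁻¹) * y⁻¹ := by group
        rw [this]; exact (ihy _ (ihz x hx).1).1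
      · have : (y * z)⁻¹ * x * (y * z) = z⁻¹ * (y⁻¹ * x * y) * z := by group
        rw [this]; exact (ihz _ (ihy x hx).2).2
    | inv y hy ihy =>
      intro x hx
      constructor
      · have : y⁻¹ * x * y⁻¹⁻¹ = y⁻¹ * x * y := by group
        rw [this]; exact (ihy x hx).2
      · have : y⁻¹⁻¹ * x * y⁻¹ = y * x * y⁻¹ := by group
        rw [this]; exact (ihy x hx).1
  intro x hx
  exact (this x hx).1

lemma piBar_cyclic (hε : ∀ i j : Fin n, i < j → ε i j = 1 ∨ ε i j = -1) (j : Fin n) :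
    ∀ x ∈ piBar n ε a (j : ℕ), ∃ k : ℤ,
      x * ((PresentedGroup.of j : PresentedGroup (iterRels n ε a)) ^ k)⁻¹ ∈
        piBar n ε a ((j : ℕ) + 1) := by
  have hN : (piBar n ε a ((j : ℕ) + 1)).Normal := piBar_normal hε _
  intro x hx
  induction hx using Subgroup.closure_induction with
  | mem y hy =>
    obtain ⟨m, hm, rfl⟩ := hy
    rcases eq_or_lt_of_le hm with h | h
    · refine ⟨1, ?_⟩
      have : m = j := Fin.ext h.symm
      subst this
      simpa using one_mem _
    · exact ⟨0, by simpa using gen_mem h⟩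
  | one => exact ⟨0, by simpa using one_mem _⟩
  | mul y z hy hz ihy ihz =>
    obtain ⟨ky, hky⟩ := ihy
    obtain ⟨kz, hkz⟩ := ihz
    refine ⟨ky + kz, ?_⟩
    have heq : y * z * ((PresentedGroup.of j : PresentedGroup (iterRels n ε a)) ^ (ky + kz))⁻¹ =
        (y * ((PresentedGroup.of j) ^ ky)⁻¹) *
        ((PresentedGroup.of j) ^ ky * (z * ((PresentedGroup.of j) ^ kz)⁻¹) *
          ((PresentedGroup.of j) ^ ky)⁻¹) := by
      rw [zpow_add]; group
    rw [heq]
    exact mul_mem hky (hN.conj_mem _ hkz _)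
  | inv y hy ihy =>
    obtain ⟨k, hk⟩ := ihy
    refine ⟨-k, ?_⟩
    have heq : y⁻¹ * ((PresentedGroup.of j : PresentedGroup (iterRels n ε a)) ^ (-k))⁻¹ =
        y⁻¹ * (y * ((PresentedGroup.of j) ^ k)⁻¹)⁻¹ * y⁻¹⁻¹ := by
      rw [zpow_neg]; group
    rw [heq]
    exact hN.conj_mem _ (inv_mem hk) _

lemma piBar_zero : piBar n ε a 0 = ⊤ := by
  have : { x : PresentedGroup (iterRels n ε a) |
      ∃ k : Fin n, 0 ≤ (k : ℕ) ∧ x = PresentedGroup.of k } =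
      Set.range (PresentedGroup.of : Fin n → PresentedGroup (iterRels n ε a)) := by
    ext x
    simp [eq_comm]
  rw [piBar, this, PresentedGroup.closure_range_of]

end Aux

/-- In `πₙ`, each subgroup `π̄ⱼ = ⟨sⱼ, …, sₙ⟩` is normal in `πₙ`; moreover each
`π̄_{j+1}` is contained and normal in `π̄ⱼ`, and the quotient `π̄ⱼ/π̄_{j+1}` is cyclic,
generated by the image of `sⱼ`.  In particular `πₙ` is supersolvable. -/
theorem iterated_S1_bundle_pi1_supersolvable
    (n : ℕ) (hn : 1 ≤ n) (ε : Fin n → Fin n → ℤ) (a : Fin n → Fin n → Fin n → ℤ)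
    (hε : ∀ i j : Fin n, i < j → ε i j = 1 ∨ ε i j = -1) :
    (∀ j : ℕ, (piBar n ε a j).Normal) ∧
    (∀ j : ℕ, piBar n ε a (j + 1) ≤ piBar n ε a j) ∧
    (∀ j : ℕ, ((piBar n ε a (j + 1)).subgroupOf (piBar n ε a j)).Normal) ∧
    (∀ j : Fin n, ∀ x ∈ piBar n ε a (j : ℕ), ∃ k : ℤ,
        x * ((PresentedGroup.of j : PresentedGroup (iterRels n ε a)) ^ k)⁻¹ ∈
          piBar n ε a ((j : ℕ) + 1)) ∧
    IsSupersolvable (PresentedGroup (iterRels n ε a)) := by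
  refine ⟨piBar_normal hε, fun j => piBar_anti (by omega), ?_, piBar_cyclic hε, ?_⟩
  · intro j
    exact (piBar_normal hε (j + 1)).subgroupOf _
  · refine ⟨n, piBar n ε a, piBar_zero, piBar_eq_bot le_rfl,
      fun i => piBar_anti (by omega), fun i => piBar_normal hε i, ?_⟩
    intro i
    by_cases hi : i < n
    · refine ⟨PresentedGroup.of ⟨i, hi⟩, gen_mem le_rfl, ?_⟩
      exact piBar_cyclic hε ⟨i, hi⟩
    · refine ⟨1, one_mem _, ?_⟩
      intro x hx
      rw [piBar_eq_bot (by omega)] at hx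
      simp only [Subgroup.mem_bot] at hx
      exact ⟨0, by simp [hx, one_mem]⟩
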